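/- For each 0 < α ≤ 1 and n ∈ ℕ there exists q = q(n,α) ∈ ℕ such that among any q points in ℝⁿ there are three points x₀, x₁, x₂ and a direction θ ∈ S^{n-1} with x₁ ∈ X⁺(x₀,θ,α) and x₂ ∈ X⁺(x₀,−θ,α). -/
import Mathlib


open MeasureTheory Metric Filter Set
open scoped RealInnerProductSpace

/-- The one-sided open cone `X⁺(x,θ,α) = {y : (y-x)·θ > (1-α²)^{1/2}|y-x|}`. -/
def oneSidedCone {n : ℕ} (x θ : EuclideanSpace ℝ (Fin n)) (α : ℝ) :
    Set (EuclideanSpace ℝ (Fin n)) :=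
  {y | Real.sqrt (1 - α ^ 2) * ‖y - x‖ < ⟪y - x, θ⟫}

/-- A finite family of unit vectors whose caps `{u : ⟪u,θ⟫ > c}` cover the unit sphere. -/
lemma sphere_cap_cover (n : ℕ) (c : ℝ) (hc : c < 1) :
    ∃ T : Finset (EuclideanSpace ℝ (Fin n)), (∀ θ ∈ T, ‖θ‖ = 1) ∧
      ∀ u : EuclideanSpace ℝ (Fin n), ‖u‖ = 1 → ∃ θ ∈ T, c < ⟪u, θ⟫ := by
  classical
  set E := EuclideanSpace ℝ (Fin n)
  have hcomp : IsCompact (sphere (0 : E) 1) := isCompact_sphere 0 1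
  have hopen : ∀ θ : sphere (0 : E) 1, IsOpen {u : E | c < ⟪u, (θ : E)⟫} := fun θ =>
    isOpen_lt continuous_const (continuous_id.inner continuous_const)
  have hcov : sphere (0 : E) 1 ⊆ ⋃ θ : sphere (0 : E) 1, {u : E | c < ⟪u, (θ : E)⟫} := by
    intro u hu
    have hu' : ‖u‖ = 1 := mem_sphere_zero_iff_norm.mp hu
    refine Set.mem_iUnion.mpr ⟨⟨u, hu⟩, ?_⟩
    simp only [Set.mem_setOf_eq]
    rw [real_inner_self_eq_norm_sq, hu']
    simpa using hc
  obtain ⟨t, ht⟩ := hcomp.elim_finite_subcover _ hopen hcov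
  refine ⟨t.image Subtype.val, ?_, ?_⟩
  · intro θ hθ
    simp only [Finset.mem_image] at hθ
    obtain ⟨θ', _, rfl⟩ := hθ
    exact mem_sphere_zero_iff_norm.mp θ'.2
  · intro u hu
    have := ht (mem_sphere_zero_iff_norm.mpr hu)
    simp only [Set.mem_iUnion] at this
    obtain ⟨θ, hθt, hθ⟩ := this
    exact ⟨θ, Finset.mem_image_of_mem _ hθt, hθ⟩

/-- Erdős–Füredi lemma. -/
theorem stmt5 (n : ℕ) (α : ℝ) (hα0 : 0 < α) (hα1 : α ≤ 1) :
    ∃ q : ℕ, ∀ S : Finset (EuclideanSpace ℝ (Fin n)), S.card = q →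
      ∃ x₀ ∈ S, ∃ x₁ ∈ S, ∃ x₂ ∈ S, ∃ θ : EuclideanSpace ℝ (Fin n), ‖θ‖ = 1 ∧
        x₁ ∈ oneSidedCone x₀ θ α ∧ x₂ ∈ oneSidedCone x₀ (-θ) α := by
  classical
  set E := EuclideanSpace ℝ (Fin n)
  set c := Real.sqrt (1 - α ^ 2) with hcdef
  have hc1 : c < 1 := by
    rw [hcdef]
    exact (Real.sqrt_lt' one_pos).mpr (by nlinarith)
  obtain ⟨T, hTnorm, hTcov⟩ := sphere_cap_cover n c hc1
  refine ⟨2 ^ T.card + 1, ?_⟩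
  intro S hS
  by_contra hcon
  push_neg at hcon
  set e := S.equivFin with he
  set x : Fin S.card → E := fun i => (e.symm i : E) with hx
  have hxS : ∀ i, x i ∈ S := fun i => (e.symm i).2
  have hxinj : Function.Injective x := fun i j h =>
    e.symm.injective (Subtype.coe_injective h)
  -- every increasing pair has its direction in some cap
  have key : ∀ i j : Fin S.card, i < j →
      ∃ θ ∈ T, c * ‖x j - x i‖ < ⟪x j - x i, θ⟫ := by
    intro i j hij
    have hne : x j - x i ≠ 0 := sub_ne_zero.mpr fun h => (ne_of_gt hij) (hxinj h)
    have hpos : 0 < ‖x j - x i‖ := norm_pos_iff.mpr hne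
    obtain ⟨θ, hθT, hθ⟩ := hTcov (‖x j - x i‖⁻¹ • (x j - x i)) (by
      rw [norm_smul, norm_inv, norm_norm, inv_mul_cancel₀ (ne_of_gt hpos)])
    refine ⟨θ, hθT, ?_⟩
    rw [real_inner_smul_left, inv_mul_eq_div] at hθ
    exact (lt_div_iff₀ hpos).mp hθ
  -- no monochromatic increasing path of length two (else the theorem would hold)
  have hnopath : ∀ h i j : Fin S.card, h < i → i < j → ∀ θ ∈ T,
      c * ‖x i - x h‖ < ⟪x i - x h, θ⟫ → c * ‖x j - x i‖ < ⟪x j - x i, θ⟫ → False := by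
    intro h i j hhi hij θ hθT h1 h2
    refine hcon (x i) (hxS i) (x j) (hxS j) (x h) (hxS h) θ (hTnorm θ hθT) ?_ ?_
    · exact h2
    · show Real.sqrt (1 - α ^ 2) * ‖x h - x i‖ < ⟪x h - x i, -θ⟫
      have h3 : ⟪x h - x i, -θ⟫ = ⟪x i - x h, θ⟫ := by
        rw [show x h - x i = -(x i - x h) by abel, inner_neg_left, inner_neg_right, neg_neg]
      rw [h3, norm_sub_rev]
      exact h1
  set g : Fin S.card → Finset E := fun j =>
    T.filter (fun θ => ∃ i, i < j ∧ c * ‖x j - x i‖ < ⟪x j - x i, θ⟫) with hg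
  have main : ∀ i j : Fin S.card, i < j → g i ≠ g j := by
    intro i j hij hgeq
    obtain ⟨θ, hθT, hθ⟩ := key i j hij
    have hθgj : θ ∈ g j := Finset.mem_filter.mpr ⟨hθT, ⟨i, hij, hθ⟩⟩
    rw [← hgeq] at hθgj
    obtain ⟨-, h, hhi, hh⟩ := Finset.mem_filter.mp hθgj
    exact hnopath h i j hhi hij θ hθT hh hθ
  have ginj : Function.Injective g := by
    intro i j hgij
    rcases lt_trichotomy i j with h | h | h
    · exact absurd hgij (main i j h)
    · exact h
    · exact absurd hgij.symm (main j i h)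
  have hsub : ∀ j, g j ∈ T.powerset := fun j =>
    Finset.mem_powerset.mpr (Finset.filter_subset _ _)
  have hcard : (Finset.univ : Finset (Fin S.card)).card ≤ T.powerset.card :=
    Finset.card_le_card_of_injOn g (fun j _ => hsub j) fun a _ b _ h => ginj h
  rw [Finset.card_univ, Fintype.card_fin, Finset.card_powerset, hS] at hcard
  omega
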